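/- Let p ≥ 2, let Ω ⊂ ℝ^n be a bounded open set, and let A : closure(Ω) → n×n real symmetric matrices be continuous and uniformly positive definite. Then there exists C > 0 such that for all x ∈ closure(Ω) and all ξ, ζ ∈ ℝ^n, (⟨A(x)ξ,ξ⟩^{(p−2)/2} A(x)ξ − ⟨A(x)ζ,ζ⟩^{(p−2)/2} A(x)ζ) · (ξ − ζ) ≥ C·|ξ − ζ|^p. -/

import Mathlib

open Real

/-- The quadratic form `⟨M ξ, ξ⟩` of a matrix `M` on `ℝ^n`. -/
noncomputable def quadForm {n : ℕ} (M : Matrix (Fin n) (Fin n) ℝ)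
    (ξ : EuclideanSpace ℝ (Fin n)) : ℝ :=
  ∑ i, ∑ j, M i j * ξ j * ξ i

section Aux

open Matrix

/-- Coerce a Euclidean vector to a plain function. -/
def simonAux_ev {n : ℕ} (x : EuclideanSpace ℝ (Fin n)) : Fin n → ℝ := x

/-- Coerce a plain function to a Euclidean vector. -/
def simonAux_vE {n : ℕ} (x : Fin n → ℝ) : EuclideanSpace ℝ (Fin n) := WithLp.toLp 2 x

@[simp] lemma simonAux_ev_apply {n : ℕ} (x : EuclideanSpace ℝ (Fin n)) (i : Fin n) :
    simonAux_ev x i = x i := rfl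

@[simp] lemma simonAux_ev_vE {n : ℕ} (x : Fin n → ℝ) : simonAux_ev (simonAux_vE x) = x := rfl

@[simp] lemma simonAux_ev_sub {n : ℕ} (x y : EuclideanSpace ℝ (Fin n)) :
    simonAux_ev (x - y) = simonAux_ev x - simonAux_ev y := rfl

lemma simonAux_quad_eq {n : ℕ} (B : Matrix (Fin n) (Fin n) ℝ) (η : EuclideanSpace ℝ (Fin n)) :
    quadForm B η = simonAux_ev η ⬝ᵥ (B *ᵥ simonAux_ev η) := by
  simp only [quadForm, dotProduct, Matrix.mulVec, Finset.mul_sum, simonAux_ev_apply]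
  exact Finset.sum_congr rfl fun i _ => Finset.sum_congr rfl fun j _ => by ring

lemma simonAux_inner_eq {n : ℕ} (x y : EuclideanSpace ℝ (Fin n)) :
    (inner ℝ x y : ℝ) = simonAux_ev x ⬝ᵥ simonAux_ev y := by
  simp [PiLp.inner_apply, dotProduct, simonAux_ev, mul_comm]

lemma simonAux_SdotS {n : ℕ} (S : Matrix (Fin n) (Fin n) ℝ) (hSsymm : Sᵀ = S)
    (a b : Fin n → ℝ) : (S *ᵥ a) ⬝ᵥ (S *ᵥ b) = a ⬝ᵥ ((S * S) *ᵥ b) := by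
  rw [dotProduct_mulVec, ← Matrix.mulVec_transpose, hSsymm, Matrix.mulVec_mulVec]
  rw [dotProduct_mulVec a, ← Matrix.mulVec_transpose, Matrix.transpose_mul, hSsymm]

lemma simonAux_scalar_key (p a b c t : ℝ) (hp : 2 ≤ p) (ha : 0 ≤ a) (hb : 0 ≤ b) (hc : 0 ≤ c)
    (ht : t ≤ a * b) (ht' : -(a * b) ≤ t) (hc2 : c ^ 2 = a ^ 2 + b ^ 2 - 2 * t) :
    2 ^ (1 - p) * c ^ p ≤ a ^ (p - 2) * (a ^ 2 - t) + b ^ (p - 2) * (b ^ 2 - t) := by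
  have hp2 : (0:ℝ) ≤ p - 2 := by linarith
  set A2 := a ^ (p - 2) with hA2def
  set B2 := b ^ (p - 2) with hB2def
  have hA2 : 0 ≤ A2 := rpow_nonneg ha _
  have hB2 : 0 ≤ B2 := rpow_nonneg hb _
  have hcab : c ≤ a + b := by
    nlinarith [sq_nonneg (c - (a+b)), sq_nonneg (c + (a+b))]
  have hmono : 0 ≤ (A2 - B2) * (a ^ 2 - b ^ 2) := by
    rcases le_total a b with h | h
    · have h1 : A2 ≤ B2 := rpow_le_rpow ha h hp2
      have h2 : a ^ 2 ≤ b ^ 2 := by nlinarith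
      nlinarith
    · have h1 : B2 ≤ A2 := rpow_le_rpow hb h hp2
      have h2 : b ^ 2 ≤ a ^ 2 := by nlinarith
      nlinarith
  have h1 : (A2 + B2) / 2 * c ^ 2 ≤ A2 * (a ^ 2 - t) + B2 * (b ^ 2 - t) := by
    rw [hc2]; nlinarith
  have h2 : c ^ (p - 2) ≤ 2 ^ (p - 2) * (A2 + B2) := by
    have s1 : c ^ (p - 2) ≤ (a + b) ^ (p - 2) := rpow_le_rpow hc hcab hp2
    have s2 : (a + b) ^ (p - 2) ≤ (2 * max a b) ^ (p - 2) := by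
      apply rpow_le_rpow (by linarith) _ hp2
      rcases le_total a b with h | h
      · rw [max_eq_right h]; linarith
      · rw [max_eq_left h]; linarith
    have s3 : (2 * max a b) ^ (p - 2) = 2 ^ (p - 2) * (max a b) ^ (p - 2) :=
      mul_rpow (by norm_num) (le_max_of_le_left ha)
    have s4 : (max a b) ^ (p - 2) ≤ A2 + B2 := by
      rcases le_total a b with h | h
      · rw [max_eq_right h]; linarith
      · rw [max_eq_left h]; linarith
    calc c ^ (p-2) ≤ (2 * max a b) ^ (p-2) := s1.trans s2
      _ = 2 ^ (p-2) * (max a b) ^ (p-2) := s3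
      _ ≤ 2 ^ (p-2) * (A2 + B2) := by
          have : (0:ℝ) ≤ (2:ℝ) ^ (p-2) := rpow_nonneg (by norm_num) _
          nlinarith
  have h3 : c ^ p = c ^ (p - 2) * c ^ 2 := by
    rw [← Real.rpow_natCast c 2]
    rw [← Real.rpow_add' hc (by push_cast; intro h; linarith)]
    norm_num
  have h4 : (2:ℝ) ^ (1 - p) * 2 ^ (p - 2) = 1 / 2 := by
    rw [← Real.rpow_add (by norm_num : (0:ℝ) < 2)]
    norm_num
  have h5 : 2 ^ (1 - p) * c ^ p ≤ (A2 + B2) / 2 * c ^ 2 := by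
    rw [h3]
    have hcp : (0:ℝ) ≤ c ^ 2 := sq_nonneg c
    have h2p : (0:ℝ) ≤ (2:ℝ) ^ (1 - p) := rpow_nonneg (by norm_num) _
    calc 2 ^ (1-p) * (c ^ (p-2) * c ^ 2) ≤ 2 ^ (1-p) * (2 ^ (p-2) * (A2 + B2) * c ^ 2) := by
          apply mul_le_mul_of_nonneg_left _ h2p
          exact mul_le_mul_of_nonneg_right h2 hcp
      _ = (A2 + B2) / 2 * c ^ 2 := by
          rw [show (2:ℝ)^(1-p) * (2^(p-2)*(A2+B2)*c^2) = (2^(1-p)*2^(p-2))*((A2+B2)*c^2) by ring,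
            h4]; ring
  linarith

lemma simonAux_vec_key {E : Type*} [NormedAddCommGroup E] [InnerProductSpace ℝ E]
    (p : ℝ) (hp : 2 ≤ p) (u w : E) :
    2 ^ (1 - p) * ‖u - w‖ ^ p ≤
      ‖u‖ ^ (p - 2) * (inner ℝ u (u - w) : ℝ) - ‖w‖ ^ (p - 2) * (inner ℝ w (u - w) : ℝ) := by
  have h1 : (inner ℝ u (u - w) : ℝ) = ‖u‖ ^ 2 - inner ℝ u w := by
    rw [inner_sub_right, real_inner_self_eq_norm_sq]
  have h2 : (inner ℝ w (u - w) : ℝ) = inner ℝ u w - ‖w‖ ^ 2 := by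
    rw [inner_sub_right, real_inner_self_eq_norm_sq, real_inner_comm]
  have habs := abs_real_inner_le_norm u w
  rw [abs_le] at habs
  have hc2 := norm_sub_sq_real u w
  have := simonAux_scalar_key p ‖u‖ ‖w‖ ‖u - w‖ (inner ℝ u w) hp (norm_nonneg u) (norm_nonneg w)
    (norm_nonneg _) habs.2 habs.1 (by linarith)
  rw [h1, h2]
  linarith

lemma simonAux_sq_rpow_half (x q : ℝ) (hx : 0 ≤ x) : (x ^ 2) ^ (q / 2) = x ^ q := by
  rw [← Real.rpow_natCast x 2, ← Real.rpow_mul hx]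
  rw [show ((2:ℕ):ℝ) * (q/2) = q by push_cast; ring]

end Aux

open Matrix
open scoped MatrixOrder

/-- Strong monotonicity of the anisotropic `p`-Laplacian map for `p ≥ 2`:
`(⟨Aξ,ξ⟩^{(p-2)/2} Aξ − ⟨Aζ,ζ⟩^{(p-2)/2} Aζ) · (ξ − ζ) ≥ C |ξ − ζ|^p`. -/
theorem simon_type_inequality_p_ge_two {n : ℕ} (p : ℝ) (hp : 2 ≤ p)
    (Ω : Set (EuclideanSpace ℝ (Fin n))) (hΩo : IsOpen Ω)
    (hΩb : Bornology.IsBounded Ω)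
    (A : EuclideanSpace ℝ (Fin n) → Matrix (Fin n) (Fin n) ℝ)
    (hAc : ContinuousOn A (closure Ω))
    (hAsymm : ∀ x ∈ closure Ω, (A x).IsSymm)
    (τ : ℝ) (hτ : 0 < τ)
    (hApos : ∀ x ∈ closure Ω, ∀ ξ : EuclideanSpace ℝ (Fin n),
      τ * ‖ξ‖ ^ 2 ≤ quadForm (A x) ξ) :
    ∃ C > 0, ∀ x ∈ closure Ω, ∀ ξ ζ : EuclideanSpace ℝ (Fin n),
      C * ‖ξ - ζ‖ ^ p ≤
        ∑ i, ((quadForm (A x) ξ) ^ ((p - 2) / 2) * (∑ j, A x i j * ξ j)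
            - (quadForm (A x) ζ) ^ ((p - 2) / 2) * (∑ j, A x i j * ζ j))
          * (ξ i - ζ i) := by
  refine ⟨2 ^ (1 - p) * τ ^ (p / 2), by positivity, fun x hx ξ ζ => ?_⟩
  set B := A x with hBdef
  -- B is symmetric, hence Hermitian over ℝ
  have hsymm : Bᵀ = B := hAsymm x hx
  have hherm : B.IsHermitian := by
    rw [Matrix.IsHermitian]
    ext i j
    simp only [Matrix.conjTranspose_apply, star_trivial]
    exact congrFun (congrFun hsymm i) j
  -- B is positive semidefinite
  have hpsd : B.PosSemidef := by
    refine Matrix.PosSemidef.of_dotProduct_mulVec_nonneg hherm fun v => ?_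
    have h := hApos x hx (simonAux_vE v)
    have hq := simonAux_quad_eq B (simonAux_vE v)
    rw [simonAux_ev_vE] at hq
    have h0 : (0:ℝ) ≤ τ * ‖simonAux_vE v‖ ^ 2 := by positivity
    simpa using le_trans h0 (le_of_le_of_eq h hq)
  set S := CFC.sqrt B with hSdef
  have hS2 : S * S = B := CFC.sqrt_mul_sqrt_self B hpsd.nonneg
  have hSsymm : Sᵀ = S := by
    have h := (CFC.sqrt_nonneg B).posSemidef.isHermitian
    rw [Matrix.IsHermitian] at h
    ext i j
    have := congrFun (congrFun h i) j
    simpa [Matrix.conjTranspose_apply] using this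
  have key : ∀ a b : Fin n → ℝ, (S *ᵥ a) ⬝ᵥ (S *ᵥ b) = a ⬝ᵥ (B *ᵥ b) := by
    intro a b; rw [← hS2]; exact simonAux_SdotS S hSsymm a b
  -- the transformed vectors
  set u : EuclideanSpace ℝ (Fin n) := simonAux_vE (S *ᵥ simonAux_ev ξ) with hu
  set w : EuclideanSpace ℝ (Fin n) := simonAux_vE (S *ᵥ simonAux_ev ζ) with hw
  set d : Fin n → ℝ := simonAux_ev ξ - simonAux_ev ζ with hd
  have hdsub : simonAux_ev (ξ - ζ) = d := rfl
  have huw : simonAux_ev (u - w) = S *ᵥ d := by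
    rw [simonAux_ev_sub, hu, hw, simonAux_ev_vE, simonAux_ev_vE, hd, Matrix.mulVec_sub]
  -- quadForm B ξ = ‖u‖²
  have hqu : quadForm B ξ = ‖u‖ ^ 2 := by
    rw [simonAux_quad_eq, ← real_inner_self_eq_norm_sq u, simonAux_inner_eq, hu, simonAux_ev_vE,
      key]
  have hqw : quadForm B ζ = ‖w‖ ^ 2 := by
    rw [simonAux_quad_eq, ← real_inner_self_eq_norm_sq w, simonAux_inner_eq, hw, simonAux_ev_vE,
      key]
  -- rpow of quadForm
  have hru : quadForm B ξ ^ ((p - 2) / 2) = ‖u‖ ^ (p - 2) := by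
    rw [hqu, simonAux_sq_rpow_half _ _ (norm_nonneg u)]
  have hrw : quadForm B ζ ^ ((p - 2) / 2) = ‖w‖ ^ (p - 2) := by
    rw [hqw, simonAux_sq_rpow_half _ _ (norm_nonneg w)]
  -- rewrite the RHS sum
  have hdot1 : (inner ℝ u (u - w) : ℝ) = (B *ᵥ simonAux_ev ξ) ⬝ᵥ d := by
    rw [real_inner_comm, simonAux_inner_eq, huw, hu, simonAux_ev_vE, key,
      dotProduct_comm]
  have hdot2 : (inner ℝ w (u - w) : ℝ) = (B *ᵥ simonAux_ev ζ) ⬝ᵥ d := by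
    rw [real_inner_comm, simonAux_inner_eq, huw, hw, simonAux_ev_vE, key,
      dotProduct_comm]
  have hRHS : (∑ i, ((quadForm B ξ) ^ ((p - 2) / 2) * (∑ j, B i j * ξ j)
        - (quadForm B ζ) ^ ((p - 2) / 2) * (∑ j, B i j * ζ j)) * (ξ i - ζ i))
      = ‖u‖ ^ (p - 2) * (inner ℝ u (u - w) : ℝ) - ‖w‖ ^ (p - 2) * (inner ℝ w (u - w) : ℝ) := by
    rw [hdot1, hdot2, ← hru, ← hrw]
    simp only [dotProduct, Matrix.mulVec, Finset.mul_sum, ← Finset.sum_sub_distrib,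
      dotProduct, hd, Pi.sub_apply, simonAux_ev_apply]
    refine Finset.sum_congr rfl fun i _ => ?_
    rw [Finset.sum_sub_distrib, ← Finset.mul_sum, ← Finset.mul_sum]
    ring
  -- lower bound on ‖u - w‖
  have hlow : τ * ‖ξ - ζ‖ ^ 2 ≤ ‖u - w‖ ^ 2 := by
    have h := hApos x hx (ξ - ζ)
    have : quadForm B (ξ - ζ) = ‖u - w‖ ^ 2 := by
      rw [simonAux_quad_eq, hdsub, ← real_inner_self_eq_norm_sq (u - w), simonAux_inner_eq, huw,
        key]
    linarith [le_of_le_of_eq h this]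
  have hnorm : τ ^ (p / 2) * ‖ξ - ζ‖ ^ p ≤ ‖u - w‖ ^ p := by
    calc τ ^ (p / 2) * ‖ξ - ζ‖ ^ p = (τ * ‖ξ - ζ‖ ^ 2) ^ (p / 2) := by
          rw [mul_rpow hτ.le (sq_nonneg _), simonAux_sq_rpow_half _ _ (norm_nonneg _)]
      _ ≤ (‖u - w‖ ^ 2) ^ (p / 2) := by
          apply rpow_le_rpow (by positivity) hlow (by linarith)
      _ = ‖u - w‖ ^ p := simonAux_sq_rpow_half _ _ (norm_nonneg _)
  have hvec := simonAux_vec_key p hp u w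
  have h2p : (0:ℝ) ≤ (2:ℝ) ^ (1 - p) := rpow_nonneg (by norm_num) _
  calc 2 ^ (1 - p) * τ ^ (p / 2) * ‖ξ - ζ‖ ^ p
      = 2 ^ (1 - p) * (τ ^ (p / 2) * ‖ξ - ζ‖ ^ p) := by ring
    _ ≤ 2 ^ (1 - p) * ‖u - w‖ ^ p := mul_le_mul_of_nonneg_left hnorm h2p
    _ ≤ ‖u‖ ^ (p - 2) * (inner ℝ u (u - w) : ℝ) - ‖w‖ ^ (p - 2) * (inner ℝ w (u - w) : ℝ) := hvec
    _ = _ := hRHS.symm
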